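/- (Lemma 1.) Let W be an N×N real matrix with nonnegative entries that is weight-balanced, with Laplacian L = D − W. Let x̂, e ∈ ℝᴺ, set x = x̂ − e, and let u = −L x̂, i.e. u_i = −Σ_j w_{ij}(x̂_i − x̂_j). Let b_i, c_i > 0 for all i and define δ_i = 1 − d_i b_i/2 − Σ_{j=1}^N w_{ij} c_j/2. Then xᵀLᵀu ≤ −Σ_{i=1}^N [ δ_i u_i² − ( d_i/(2 b_i) + d_i/(2 c_i) ) e_i² ], where xᵀLᵀu denotes the inner product of Lx and u. (Since ẋ = u, the left-hand side is the derivative of the Lyapunov function V₂(x) = (1/2) xᵀLᵀx along the event-triggered dynamics.) -/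
import Mathlib


open Matrix Finset

/-- The out-degree of node `i`: the `i`-th row sum of the weight matrix. -/
def outDeg {N : ℕ} (W : Matrix (Fin N) (Fin N) ℝ) (i : Fin N) : ℝ := ∑ j, W i j

/-- `W` is weight-balanced if every row sum equals the corresponding column sum. -/
def IsWeightBalanced {N : ℕ} (W : Matrix (Fin N) (Fin N) ℝ) : Prop :=
  ∀ i, (∑ j, W i j) = ∑ j, W j i

/-- The Laplacian `L = D − W`. -/
noncomputable def lap {N : ℕ} (W : Matrix (Fin N) (Fin N) ℝ) : Matrix (Fin N) (Fin N) ℝ :=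
  Matrix.diagonal (outDeg W) - W
/-- `δᵢ = 1 − dᵢ bᵢ/2 − ∑ⱼ wᵢⱼ cⱼ/2`. -/
noncomputable def delta {N : ℕ} (W : Matrix (Fin N) (Fin N) ℝ) (b c : Fin N → ℝ)
    (i : Fin N) : ℝ :=
  1 - outDeg W i * b i / 2 - (∑ j, W i j * c j) / 2


lemma lap_mulVec {N : ℕ} (W : Matrix (Fin N) (Fin N) ℝ) (v : Fin N → ℝ) (i : Fin N) :
    (lap W *ᵥ v) i = ∑ j, W i j * (v i - v j) := by
  rw [lap, Matrix.sub_mulVec, Pi.sub_apply, mulVec_diagonal]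
  simp only [mulVec, dotProduct, mul_sub, Finset.sum_sub_distrib, outDeg, Finset.sum_mul]

lemma young (a u cc : ℝ) (hcc : 0 < cc) : a * u ≤ cc / 2 * u ^ 2 + a ^ 2 / (2 * cc) := by
  have h2 : (0:ℝ) < 2 * cc := by positivity
  have hm := div_mul_cancel₀ (a ^ 2) h2.ne'
  nlinarith [sq_nonneg (cc * u - a), hm, sq_nonneg (cc * u + a)]

/-- Lemma 1: for weight-balanced nonnegative `W`, `x = x̂ − e`,
`u = −Lx̂`, and `bᵢ, cᵢ > 0`,
`xᵀLᵀu ≤ −∑ᵢ [δᵢ uᵢ² − (dᵢ/(2bᵢ) + dᵢ/(2cᵢ)) eᵢ²]`. -/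
theorem stmt7 {N : ℕ} (W : Matrix (Fin N) (Fin N) ℝ) (hW : ∀ i j, 0 ≤ W i j)
    (hWB : IsWeightBalanced W) (xh e : Fin N → ℝ) (u : Fin N → ℝ)
    (hu : u = -(lap W *ᵥ xh)) (b c : Fin N → ℝ)
    (hb : ∀ i, 0 < b i) (hc : ∀ i, 0 < c i) :
    (lap W *ᵥ (xh - e)) ⬝ᵥ u ≤
      -∑ i, (delta W b c i * (u i)^2
        - (outDeg W i / (2 * b i) + outDeg W i / (2 * c i)) * e i^2) := by

  set term : Fin N → Fin N → ℝ := fun i j =>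
    b i / 2 * (u i)^2 + (e i)^2 / (2 * b i) + c j / 2 * (u i)^2 + (e j)^2 / (2 * c j) with hterm
  have hu' : ∀ i, ∑ j, W i j * (xh i - xh j) = -u i := by
    intro i
    rw [hu]
    simp [lap_mulVec]
  have hL : (lap W *ᵥ (xh - e)) ⬝ᵥ u
      = ∑ i, (-(u i)^2 + ∑ j, W i j * ((e j - e i) * u i)) := by
    unfold dotProduct
    refine Finset.sum_congr rfl fun i _ => ?_
    rw [lap_mulVec]
    have h1 : ∑ j, W i j * ((xh - e) i - (xh - e) j)
        = ∑ j, (W i j * (xh i - xh j) - W i j * ((e i - e j))) := by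
      refine Finset.sum_congr rfl fun j _ => ?_
      simp only [Pi.sub_apply]; ring
    rw [h1, Finset.sum_sub_distrib, hu' i, sub_mul, Finset.sum_mul]
    have h2 : ∑ j, W i j * (e i - e j) * u i = -∑ j, W i j * ((e j - e i) * u i) := by
      rw [← Finset.sum_neg_distrib]
      refine Finset.sum_congr rfl fun j _ => by ring
    rw [h2]; ring
  rw [hL]
  have key : ∀ i ∈ Finset.univ, -(u i)^2 + ∑ j, W i j * ((e j - e i) * u i)
      ≤ -(u i)^2 + ∑ j, W i j * term i j := by
    intro i _
    gcongr with j _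
    · exact hW i j
    · have h1 := young (e j) (u i) (c j) (hc j)
      have h2 := young (-e i) (u i) (b i) (hb i)
      rw [neg_sq] at h2
      rw [hterm]
      nlinarith [h1, h2]
  refine le_trans (Finset.sum_le_sum key) (le_of_eq ?_)
  have split : ∀ i, ∑ j, W i j * term i j
      = outDeg W i * (b i / 2 * (u i)^2 + (e i)^2 / (2 * b i))
        + (∑ j, W i j * c j) * ((u i)^2 / 2)
        + ∑ j, W i j * ((e j)^2 / (2 * c j)) := by
    intro i
    rw [outDeg, Finset.sum_mul, Finset.sum_mul, ← Finset.sum_add_distrib,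
      ← Finset.sum_add_distrib]
    refine Finset.sum_congr rfl fun j _ => ?_
    rw [hterm]; ring
  have swapped : ∑ i, ∑ j, W i j * ((e j)^2 / (2 * c j))
      = ∑ i, outDeg W i * ((e i)^2 / (2 * c i)) := by
    rw [Finset.sum_comm]
    refine Finset.sum_congr rfl fun j _ => ?_
    rw [← Finset.sum_mul, outDeg, hWB j]
  simp only [split]
  have expand : ∀ i, -(u i)^2
        + (outDeg W i * (b i / 2 * (u i)^2 + (e i)^2 / (2 * b i))
          + (∑ j, W i j * c j) * ((u i)^2 / 2)
          + ∑ j, W i j * ((e j)^2 / (2 * c j)))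
      = (-(u i)^2 + outDeg W i * (b i / 2 * (u i)^2 + (e i)^2 / (2 * b i))
          + (∑ j, W i j * c j) * ((u i)^2 / 2))
        + ∑ j, W i j * ((e j)^2 / (2 * c j)) := fun i => by ring
  simp only [expand]
  rw [Finset.sum_add_distrib, swapped, ← Finset.sum_add_distrib, ← Finset.sum_neg_distrib]
  refine Finset.sum_congr rfl fun i _ => ?_
  rw [delta]
  have hbi := (hb i).ne'
  have hci := (hc i).ne'
  field_simp
  ring
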